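/- arXiv:math/0309380 — 6 statements merged into one kernel-verified Lean document; each statement's English description precedes it below -/
import Mathlib

section
/- The chromatic number of a finite undirected graph H equals the minimum over all acyclic orientations ω of H of l_ω, the number of nodes on a longest directed path under ω. -/
open SimpleGraph

open scoped Classical

noncomputable section

/-- An orientation of an undirected graph `G`: each edge receives exactly one
direction. -/
structure GraphOrientation {V : Type*} (G : SimpleGraph V) where
  dir : V → V → Prop
  dir_iff : ∀ u v, G.Adj u v ↔ (dir u v ∨ dir v u)
  not_both : ∀ u v, dir u v → ¬ dir v u

/-- An orientation is acyclic if it produces no directed cycle. -/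
def GraphOrientation.Acyclic {V : Type*} {G : SimpleGraph V}
    (ω : GraphOrientation G) : Prop :=
  ∀ v, ¬ Relation.TransGen ω.dir v v

/-- The number of nodes on a longest directed path of the relation `dir`. -/
def dirPathLen {V : Type*} (dir : V → V → Prop) : ℕ :=
  sSup {n | ∃ l : List V, l.Chain' dir ∧ l.length = n}

/-- The lexicographic product `G^k` of `G` with the complete graph on `k`
nodes: nodes `i^1, …, i^k` for each node `i` of `G`; all pairs `i^a, i^b`
(`a ≠ b`) are adjacent, and `i^a` is adjacent to `j^b` whenever `(i,j)` is an
edge of `G`. -/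
def lexProd {V : Type*} (G : SimpleGraph V) (k : ℕ) : SimpleGraph (V × Fin k) where
  Adj x y := G.Adj x.1 y.1 ∨ (x.1 = y.1 ∧ x.2 ≠ y.2)
  symm := ⟨fun x y h => by
    rcases h with h | ⟨h1, h2⟩
    · exact Or.inl h.symm
    · exact Or.inr ⟨h1.symm, h2.symm⟩⟩
  loopless := ⟨fun x h => by
    rcases h with h | ⟨h1, h2⟩
    · exact G.loopless.irrefl _ h
    · exact h2 rfl⟩

/-- A layered orientation of `G^k`: every edge between distinct layers points
from the higher layer to the lower one, and for each edge of `G` the `k`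
within-layer copies receive the same orientation. -/
def IsLayered {V : Type*} {G : SimpleGraph V} {k : ℕ}
    (φ : GraphOrientation (lexProd G k)) : Prop :=
  (∀ x y : V × Fin k, (lexProd G k).Adj x y → y.2 < x.2 → φ.dir x y) ∧
  (∀ i j : V, ∀ a b : Fin k, φ.dir (i, a) (j, a) → φ.dir (i, b) (j, b))

/-- A `k`-tuple coloring of `G`, recorded as the increasing list
`c v 0 < c v 1 < ⋯` of the `k` distinct colors of each node `v`; adjacent
nodes share no color. -/
def IsKTupleColoring {V : Type*} (G : SimpleGraph V) (k : ℕ)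
    (c : V → Fin k → ℕ) : Prop :=
  (∀ v, StrictMono (c v)) ∧ ∀ u v, G.Adj u v → ∀ a b, c u a ≠ c v b

/-- The colors of `u` and `v` strictly alternate, starting with `u`:
`c u 0 < c v 0 < c u 1 < c v 1 < ⋯ < c u (k-1) < c v (k-1)`. -/
def Alt {V : Type*} (k : ℕ) (c : V → Fin k → ℕ) (u v : V) : Prop :=
  (∀ a : Fin k, c u a < c v a) ∧
  ∀ (a : Fin k) (h : (a : ℕ) + 1 < k), c v a < c u ⟨(a : ℕ) + 1, h⟩

/-- An interleaved `k`-tuple coloring: on every edge the two `k`-tuples of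
colors strictly alternate. -/
def IsInterleavedColoring {V : Type*} (G : SimpleGraph V) (k : ℕ)
    (c : V → Fin k → ℕ) : Prop :=
  IsKTupleColoring G k c ∧ ∀ u v, G.Adj u v → Alt k c u v ∨ Alt k c v u

/-- The `k`-chromatic number `χ^k(G)`: the least number of colors in a
`k`-tuple coloring of `G`. -/
def chiK {V : Type*} (G : SimpleGraph V) (k : ℕ) : ℕ :=
  sInf {n | ∃ c : V → Fin k → ℕ, IsKTupleColoring G k c ∧ ∀ v a, c v a < n}

/-- The interleaved `k`-chromatic number `χ_int^k(G)`. -/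
def chiIntK {V : Type*} (G : SimpleGraph V) (k : ℕ) : ℕ :=
  sInf {n | ∃ c : V → Fin k → ℕ, IsInterleavedColoring G k c ∧ ∀ v a, c v a < n}

/-- The chromatic number of `G`: the least number of colors in a proper
(1-tuple) coloring. -/
def chromNat {V : Type*} (G : SimpleGraph V) : ℕ :=
  sInf {n | ∃ c : V → ℕ, (∀ u v, G.Adj u v → c u ≠ c v) ∧ ∀ v, c v < n}

/-- The multichromatic number `χ^*(G) = inf_{k ≥ 1} χ^k(G)/k`. -/
def chiStar {V : Type*} (G : SimpleGraph V) : ℝ :=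
  ⨅ k : ℕ+, (chiK G k : ℝ) / ((k : ℕ) : ℝ)

/-- The interleaved multichromatic number
`χ_int^*(G) = inf_{k ≥ 1} χ_int^k(G)/k`. -/
def chiIntStar {V : Type*} (G : SimpleGraph V) : ℝ :=
  ⨅ k : ℕ+, (chiIntK G k : ℝ) / ((k : ℕ) : ℝ)

/-- `m(κ⁺, ω)`: the number of edges of the closed walk `κ` oriented by `ω` in
the traversal direction of `κ`. -/
def mFwd {V : Type*} {G : SimpleGraph V} {v : V} (ω : GraphOrientation G)
    (κ : G.Walk v v) : ℕ :=
  (κ.darts.filter (fun d => decide (ω.dir d.toProd.1 d.toProd.2))).length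

/-- `m(κ⁻, ω)`: the number of edges of the closed walk `κ` oriented by `ω`
against the traversal direction of `κ`. -/
def mBwd {V : Type*} {G : SimpleGraph V} {v : V} (ω : GraphOrientation G)
    (κ : G.Walk v v) : ℕ :=
  (κ.darts.filter (fun d => decide (ω.dir d.toProd.2 d.toProd.1))).length

end

private lemma aux_nodup {V : Type*} {dir : V → V → Prop}
    (hac : ∀ v, ¬ Relation.TransGen dir v v) {l : List V} (hl : l.Chain' dir) :
    l.Nodup := by
  haveI : IsTrans V (Relation.TransGen dir) := ⟨fun _ _ _ h1 h2 => h1.trans h2⟩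
  have h2 : l.Chain' (Relation.TransGen dir) :=
    hl.imp (fun _ _ h => Relation.TransGen.single h)
  have h3 := List.isChain_iff_pairwise.mp h2
  exact h3.imp (fun h => by rintro rfl; exact hac _ h)

private lemma chain_len_le_card {V : Type*} [Fintype V] {dir : V → V → Prop}
    (hac : ∀ v, ¬ Relation.TransGen dir v v) {l : List V} (hl : l.Chain' dir) :
    l.length ≤ Fintype.card V :=
  (aux_nodup hac hl).length_le_card

private lemma orient_of_coloring {V : Type*} [Fintype V] (H : SimpleGraph V)
    (c : V → ℕ) (hc : ∀ u v, H.Adj u v → c u ≠ c v) (n : ℕ) (hn : ∀ v, c v < n) :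
    ∃ ω : GraphOrientation H, ω.Acyclic ∧ dirPathLen ω.dir ≤ n := by
  refine ⟨⟨fun u v => H.Adj u v ∧ c u < c v, ?_, ?_⟩, ?_, ?_⟩
  · intro u v
    constructor
    · intro h
      rcases lt_or_gt_of_ne (hc u v h) with h' | h'
      · exact Or.inl ⟨h, h'⟩
      · exact Or.inr ⟨h.symm, h'⟩
    · rintro (⟨h, _⟩ | ⟨h, _⟩)
      · exact h
      · exact h.symm
  · rintro u v ⟨_, h1⟩ ⟨_, h2⟩; omega
  · intro v hv
    have key : ∀ a b : V, Relation.TransGen (fun u v => H.Adj u v ∧ c u < c v) a b →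
        c a < c b := by
      intro a b h
      induction h with
      | single h => exact h.2
      | tail _ h ih => exact ih.trans h.2
    exact absurd (key v v hv) (lt_irrefl _)
  · show sSup {m | ∃ l : List V, l.Chain' (fun u v => H.Adj u v ∧ c u < c v) ∧ l.length = m} ≤ n
    have hne : {m | ∃ l : List V,
        l.Chain' (fun u v => H.Adj u v ∧ c u < c v) ∧ l.length = m}.Nonempty :=
      ⟨0, [], List.isChain_nil, rfl⟩
    apply csSup_le hne
    rintro m ⟨l, hl, rfl⟩
    have hmc : (l.map c).Chain' (· < ·) :=
      (List.isChain_map c).mpr (hl.imp fun _ _ h => h.2)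
    have hp : (l.map c).Pairwise (· < ·) := List.isChain_iff_pairwise.mp hmc
    have hnd : (l.map c).Nodup := hp.imp ne_of_lt
    have hsub : (l.map c).toFinset ⊆ Finset.range n := by
      intro x hx
      rw [List.mem_toFinset] at hx
      rw [Finset.mem_range]
      rcases List.mem_map.mp hx with ⟨v, _, rfl⟩
      exact hn v
    calc l.length = (l.map c).length := (List.length_map _).symm
      _ = (l.map c).toFinset.card := (List.toFinset_card_of_nodup hnd).symm
      _ ≤ (Finset.range n).card := Finset.card_le_card hsub
      _ = n := Finset.card_range n

private lemma coloring_of_orient {V : Type*} [Fintype V] (H : SimpleGraph V)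
    (ω : GraphOrientation H) (hac : ω.Acyclic) :
    ∃ c : V → ℕ, (∀ u v, H.Adj u v → c u ≠ c v) ∧ ∀ v, c v < dirPathLen ω.dir := by
  set dir := ω.dir with hdir
  set S : V → Set ℕ := fun v =>
    {n | ∃ l : List V, l.Chain' dir ∧ l.length = n ∧ l.getLast? = some v} with hS
  have bdd : ∀ v, BddAbove (S v) := by
    intro v
    refine ⟨Fintype.card V, ?_⟩
    rintro n ⟨l, hl, rfl, _⟩
    exact chain_len_le_card hac hl
  have one_mem : ∀ v, (1 : ℕ) ∈ S v := fun v => ⟨[v], List.isChain_singleton v, rfl, rfl⟩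
  set f : V → ℕ := fun v => sSup (S v) with hf
  have f_ge : ∀ v, 1 ≤ f v := fun v => le_csSup (bdd v) (one_mem v)
  have f_mem : ∀ v, f v ∈ S v := fun v => Nat.sSup_mem ⟨1, one_mem v⟩ (bdd v)
  have step : ∀ u v, dir u v → f u < f v := by
    intro u v huv
    obtain ⟨l, hl, hlen, hlast⟩ := f_mem u
    have hmem : f u + 1 ∈ S v := by
      refine ⟨l ++ [v], ?_, by simp [hlen], ?_⟩
      · refine List.isChain_append.mpr ⟨hl, List.isChain_singleton v, ?_⟩
        intro x hx y hy
        rw [hlast] at hx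
        simp only [List.head?_cons, Option.mem_some_iff] at hx hy
        subst hx; subst hy; exact huv
      · simp
    have h2 : f u + 1 ≤ f v := le_csSup (bdd v) hmem
    omega
  have f_le : ∀ v, f v ≤ dirPathLen dir := by
    intro v
    obtain ⟨l, hl, hlen, _⟩ := f_mem v
    have hb : BddAbove {n | ∃ l : List V, l.Chain' dir ∧ l.length = n} := by
      refine ⟨Fintype.card V, ?_⟩
      rintro n ⟨l, hl, rfl⟩
      exact chain_len_le_card hac hl
    exact le_csSup hb ⟨l, hl, hlen⟩
  refine ⟨fun v => f v - 1, ?_, ?_⟩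
  · intro u v hadj
    show f u - 1 ≠ f v - 1
    rcases (ω.dir_iff u v).mp hadj with h | h
    · have := step u v h; have := f_ge u; omega
    · have := step v u h; have := f_ge v; omega
  · intro v
    show f v - 1 < dirPathLen dir
    have h1 := f_le v
    have h2 := f_ge v
    omega

/-- The chromatic number of a finite undirected graph `H` equals
the minimum over all acyclic orientations `ω` of `H` of `l_ω`, the number of
nodes on a longest directed path under `ω`. -/
theorem stmt4 {V : Type*} [Fintype V] (H : SimpleGraph V) :
    chromNat H =
      sInf {n | ∃ ω : GraphOrientation H, ω.Acyclic ∧ n = dirPathLen ω.dir} := by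
  classical
  set c0 : V → ℕ := fun v => (Fintype.equivFin V v : ℕ) with hc0
  have hc0p : ∀ u v, H.Adj u v → c0 u ≠ c0 v := by
    intro u v h hne
    exact h.ne (Equiv.injective _ (Fin.ext hne))
  have hc0b : ∀ v, c0 v < Fintype.card V := fun v => (Fintype.equivFin V v).isLt
  obtain ⟨ω0, hω0, _⟩ := orient_of_coloring H c0 hc0p _ hc0b
  apply le_antisymm
  · refine le_csInf ⟨_, ω0, hω0, rfl⟩ ?_
    rintro n ⟨ω, hac, rfl⟩
    obtain ⟨c, hcp, hcb⟩ := coloring_of_orient H ω hac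
    exact Nat.sInf_le ⟨c, hcp, hcb⟩
  · refine le_csInf ⟨Fintype.card V, c0, hc0p, hc0b⟩ ?_
    rintro n ⟨c, hcp, hcb⟩
    obtain ⟨ω, hac, hle⟩ := orient_of_coloring H c hcp n hcb
    exact le_trans (Nat.sInf_le ⟨ω, hac, rfl⟩) hle
end

section
/- For every graph G with at least one edge and every k ≥ 1, the interleaved k-chromatic number of G equals the minimum over all layered acyclic orientations φ of the lexicographic product G^k of the number of nodes on a longest directed path under φ. -/
open SimpleGraph

open scoped Classical

open Relation

section Helpers
variable {α : Type*} [Fintype α] {r : α → α → Prop}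

lemma decomp_eq {M a b c d : ℕ} (hc : c < M) (hd : d < M) (h : a * M + c = b * M + d) :
    a = b ∧ c = d := by
  have h1 : (a * M + c) % M = c := by
    rw [Nat.add_comm, Nat.add_mul_mod_self_right]; exact Nat.mod_eq_of_lt hc
  have h2 : (b * M + d) % M = d := by
    rw [Nat.add_comm, Nat.add_mul_mod_self_right]; exact Nat.mod_eq_of_lt hd
  have hcd : c = d := by rw [← h1, ← h2, h]
  have hM : 0 < M := lt_of_le_of_lt (Nat.zero_le c) hc
  have hab : a * M = b * M := by omega
  exact ⟨Nat.eq_of_mul_eq_mul_right hM hab, hcd⟩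

lemma chain_nodup (hr : ∀ v, ¬ TransGen r v v) {l : List α} (hl : l.Chain' r) :
    l.Nodup := by
  have : IsTrans α (TransGen r) := ⟨fun _ _ _ => TransGen.trans⟩
  have hp : l.Pairwise (TransGen r) :=
    List.isChain_iff_pairwise.mp (hl.imp fun {a b} h => TransGen.single h)
  exact hp.imp fun {a b} (h : TransGen r a b) (hab : a = b) => hr a (hab ▸ h)

lemma chain_len_le (hr : ∀ v, ¬ TransGen r v v) {l : List α} (hl : l.Chain' r) :
    l.length ≤ Fintype.card α :=
  (chain_nodup hr hl).length_le_card

/-- height of x : longest tail of a chain starting at x -/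
noncomputable def hgt (r : α → α → Prop) (x : α) : ℕ :=
  sSup {n | ∃ l : List α, (x :: l).Chain' r ∧ l.length = n}

lemma hgt_set_nonempty (x : α) :
    {n | ∃ l : List α, (x :: l).Chain' r ∧ l.length = n}.Nonempty :=
  ⟨0, [], by exact List.IsChain.singleton _, rfl⟩

lemma hgt_set_bdd (hr : ∀ v, ¬ TransGen r v v) (x : α) :
    BddAbove {n | ∃ l : List α, (x :: l).Chain' r ∧ l.length = n} := by
  refine ⟨Fintype.card α, fun n hn => ?_⟩
  obtain ⟨l, hl, rfl⟩ := hn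
  have := chain_len_le hr hl
  simpa using Nat.le_of_succ_le this

lemma hgt_witness (hr : ∀ v, ¬ TransGen r v v) (x : α) :
    ∃ l : List α, (x :: l).Chain' r ∧ l.length = hgt r x :=
  Nat.sSup_mem (hgt_set_nonempty x) (hgt_set_bdd hr x)

lemma hgt_lt_of_dir (hr : ∀ v, ¬ TransGen r v v) {x y : α} (h : r x y) :
    hgt r y < hgt r x := by
  obtain ⟨l, hl, hlen⟩ := hgt_witness hr y
  have hmem : hgt r y + 1 ∈ {n | ∃ l : List α, (x :: l).Chain' r ∧ l.length = n} :=
    ⟨y :: l, List.IsChain.cons_cons h hl, by simp [hlen]⟩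
  exact Nat.lt_of_succ_le (le_csSup (hgt_set_bdd hr x) hmem)

lemma dirPathLen_bdd (hr : ∀ v, ¬ TransGen r v v) :
    BddAbove {n | ∃ l : List α, l.Chain' r ∧ l.length = n} :=
  ⟨Fintype.card α, fun n hn => by obtain ⟨l, hl, rfl⟩ := hn; exact chain_len_le hr hl⟩

lemma hgt_lt_pathlen (hr : ∀ v, ¬ TransGen r v v) (x : α) :
    hgt r x < sSup {n | ∃ l : List α, l.Chain' r ∧ l.length = n} := by
  obtain ⟨l, hl, hlen⟩ := hgt_witness hr x
  have : hgt r x + 1 ∈ {n | ∃ l : List α, l.Chain' r ∧ l.length = n} :=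
    ⟨x :: l, hl, by simp [hlen]⟩
  exact Nat.lt_of_succ_le (le_csSup (dirPathLen_bdd hr) this)

lemma pathlen_le {n : ℕ} (f : α → ℕ) (hf : ∀ x, f x < n)
    (hrf : ∀ x y, r x y → f y < f x) :
    sSup {m | ∃ l : List α, l.Chain' r ∧ l.length = m} ≤ n := by
  refine csSup_le ⟨0, [], by exact List.IsChain.nil, rfl⟩ ?_
  rintro m ⟨l, hl, rfl⟩
  have : IsTrans ℕ (· > ·) := ⟨fun _ _ _ h1 h2 => h2.trans h1⟩
  have hmap : (l.map f).Chain' (· > ·) := by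
    refine (List.isChain_map f).mpr ?_; exact hl.imp fun {a b} h => hrf _ _ h
  have hp : (l.map f).Pairwise (· > ·) := List.isChain_iff_pairwise.mp hmap
  have hnd : (l.map f).Nodup := hp.imp fun {a b} (h : a > b) (hab : a = b) => by omega
  have hsub : (l.map f).toFinset ⊆ Finset.range n := by
    intro m hm
    rw [List.mem_toFinset] at hm
    obtain ⟨x, _, rfl⟩ := List.mem_map.mp hm
    exact Finset.mem_range.mpr (hf x)
  calc l.length = (l.map f).toFinset.card := by
        rw [List.toFinset_card_of_nodup hnd, List.length_map]
    _ ≤ n := by simpa using Finset.card_le_card hsub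

end Helpers

section Main
open Relation

lemma dir1 {V : Type*} [Fintype V] {G : SimpleGraph V} {k n : ℕ}
    (c : V → Fin k → ℕ) (hc : IsInterleavedColoring G k c) (hlt : ∀ v a, c v a < n) :
    ∃ φ : GraphOrientation (lexProd G k), φ.Acyclic ∧ IsLayered φ ∧ dirPathLen φ.dir ≤ n := by
  classical
  set col : V × Fin k → ℕ := fun x => c x.1 x.2 with hcol
  have hne : ∀ x y, (lexProd G k).Adj x y → col x ≠ col y := by
    rintro ⟨i, a⟩ ⟨j, b⟩ h
    rcases h with h | ⟨h1, h2⟩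
    · exact hc.1.2 i j h a b
    · simp only [hcol]
      dsimp at h1 h2 ⊢
      subst h1
      exact fun he => h2 ((hc.1.1 i).injective he)
  refine ⟨⟨fun x y => (lexProd G k).Adj x y ∧ col y < col x, ?_, ?_⟩, ?_, ⟨?_, ?_⟩, ?_⟩
  · intro u v
    constructor
    · intro h
      rcases lt_or_gt_of_ne (hne u v h) with h' | h'
      · exact Or.inr ⟨h.symm, h'⟩
      · exact Or.inl ⟨h, h'⟩
    · rintro (⟨h, _⟩ | ⟨h, _⟩)
      · exact h
      · exact h.symm
  · rintro u v ⟨_, h1⟩ ⟨_, h2⟩; omega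
  · -- acyclic
    intro v hv
    have key : ∀ {x y : V × Fin k}, TransGen
        (fun x y => (lexProd G k).Adj x y ∧ col y < col x) x y → col y < col x := by
      intro x y h
      induction h with
      | single h => exact h.2
      | tail _ h ih => exact h.2.trans ih
    exact lt_irrefl _ (key hv)
  · -- layered 1
    rintro ⟨i, a⟩ ⟨j, b⟩ hadj hba
    refine ⟨hadj, ?_⟩
    have hba' : (b : ℕ) < (a : ℕ) := hba
    rcases hadj with h | ⟨h1, h2⟩
    · rcases hc.2 i j h with hA | hA
      · have h1 : (b : ℕ) + 1 < k := lt_of_le_of_lt hba' a.isLt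
        have h2 : c j b < c i ⟨(b : ℕ) + 1, h1⟩ := hA.2 b h1
        have h3 : c i ⟨(b : ℕ) + 1, h1⟩ ≤ c i a :=
          (hc.1.1 i).monotone (by simpa [Fin.le_def] using hba')
        exact lt_of_lt_of_le h2 h3
      · exact lt_of_lt_of_le (hA.1 b) ((hc.1.1 i).monotone (le_of_lt hba))
    · dsimp at h1; subst h1
      exact hc.1.1 i hba
  · -- layered 2
    rintro i j a b ⟨hadj, hlt'⟩
    have hG : G.Adj i j := by
      rcases hadj with h | ⟨h1, h2⟩
      · exact h
      · exact absurd rfl h2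
    rcases hc.2 i j hG with hA | hA
    · exact absurd hlt' (not_lt.mpr (le_of_lt (hA.1 a)))
    · exact ⟨Or.inl hG, hA.1 b⟩
  · -- path length
    exact pathlen_le col (fun x => hlt x.1 x.2) (fun x y h => h.2)

lemma dir2 {V : Type*} [Fintype V] {G : SimpleGraph V} {k : ℕ} (hk : 1 ≤ k)
    (φ : GraphOrientation (lexProd G k)) (hac : φ.Acyclic) (hlay : IsLayered φ) :
    ∃ c : V → Fin k → ℕ, IsInterleavedColoring G k c ∧ ∀ v a, c v a < dirPathLen φ.dir := by
  classical
  have hr : ∀ v, ¬ TransGen φ.dir v v := hac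
  set c : V → Fin k → ℕ := fun v a => hgt φ.dir (v, a) with hcdef
  have hdirlt : ∀ {x y}, φ.dir x y → hgt φ.dir y < hgt φ.dir x :=
    fun h => hgt_lt_of_dir hr h
  have hmono : ∀ v, StrictMono (c v) := by
    intro v a b hab
    have hadj : (lexProd G k).Adj (v, b) (v, a) := Or.inr ⟨rfl, hab.ne'⟩
    exact hdirlt (hlay.1 (v, b) (v, a) hadj hab)
  refine ⟨c, ⟨⟨hmono, ?_⟩, ?_⟩, ?_⟩
  · -- distinct on edges
    intro u v huv a b
    have hadj : (lexProd G k).Adj (u, a) (v, b) := Or.inl huv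
    rcases (φ.dir_iff _ _).mp hadj with h | h
    · exact ne_of_gt (hdirlt h)
    · exact ne_of_lt (hdirlt h)
  · -- alternation
    intro u v huv
    set a0 : Fin k := ⟨0, hk⟩
    have hadj0 : (lexProd G k).Adj (u, a0) (v, a0) := Or.inl huv
    rcases (φ.dir_iff _ _).mp hadj0 with h0 | h0
    · -- dir (u,a0) (v,a0) everywhere, so Alt c v u
      right
      have hall : ∀ b : Fin k, φ.dir (u, b) (v, b) := fun b => hlay.2 u v a0 b h0
      refine ⟨fun a => hdirlt (hall a), ?_⟩
      intro a ha
      have hadj : (lexProd G k).Adj (v, ⟨(a : ℕ) + 1, ha⟩) (u, a) := Or.inl huv.symm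
      exact hdirlt (hlay.1 _ _ hadj (Nat.lt_succ_self _))
    · -- dir (v,a0) (u,a0) everywhere, so Alt c u v
      left
      have hall : ∀ b : Fin k, φ.dir (v, b) (u, b) := fun b => hlay.2 v u a0 b h0
      refine ⟨fun a => hdirlt (hall a), ?_⟩
      intro a ha
      have hadj : (lexProd G k).Adj (u, ⟨(a : ℕ) + 1, ha⟩) (v, a) := Or.inl huv
      exact hdirlt (hlay.1 _ _ hadj (Nat.lt_succ_self _))
  · exact fun v a => hgt_lt_pathlen hr (v, a)

/-- For every graph `G` with at least one edge and every `k ≥ 1`,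
the interleaved `k`-chromatic number of `G` equals the minimum over all
layered acyclic orientations `φ` of the lexicographic product `G^k` of the
number of nodes on a longest directed path under `φ`. -/
theorem stmt5 {V : Type*} [Fintype V] (G : SimpleGraph V)
    (hE : G.edgeSet.Nonempty) (k : ℕ) (hk : 1 ≤ k) :
    chiIntK G k =
      sInf {n | ∃ φ : GraphOrientation (lexProd G k),
        φ.Acyclic ∧ IsLayered φ ∧ n = dirPathLen φ.dir} := by
  classical
  obtain ⟨u0, v0, huv0⟩ : ∃ u v, G.Adj u v := by
    obtain ⟨ed, hed⟩ := hE
    induction ed using Sym2.ind with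
    | _ u v => exact ⟨u, v, hed⟩
  set N := Fintype.card V with hN
  have hN0 : 0 < N := Fintype.card_pos_iff.mpr ⟨u0⟩
  set e := Fintype.equivFin V with he
  set c0 : V → Fin k → ℕ := fun v a => (e v : ℕ) + (a : ℕ) * N with hc0
  have heN : ∀ v, (e v : ℕ) < N := fun v => (e v).isLt
  have hc0col : IsInterleavedColoring G k c0 := by
    refine ⟨⟨?_, ?_⟩, ?_⟩
    · intro v a b hab
      have : (a : ℕ) * N < (b : ℕ) * N := (Nat.mul_lt_mul_right hN0).mpr hab
      simp only [hc0]; omega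
    · intro u v huv a b heq
      simp only [hc0] at heq
      rw [Nat.add_comm ((e u : ℕ)) _, Nat.add_comm ((e v : ℕ)) _] at heq
      obtain ⟨-, h2⟩ := decomp_eq (heN u) (heN v) heq
      exact huv.ne (e.injective (Fin.val_injective h2))
    · intro u v huv
      have hne : (e u : ℕ) ≠ (e v : ℕ) :=
        fun h => huv.ne (e.injective (Fin.val_injective h))
      rcases lt_or_gt_of_ne hne with h | h
      · left
        refine ⟨fun a => by simp only [hc0]; omega, ?_⟩
        intro a ha
        have : ((⟨(a : ℕ) + 1, ha⟩ : Fin k) : ℕ) * N = (a : ℕ) * N + N := by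
          simp [Nat.succ_mul]
        simp only [hc0, this]
        have := heN v; have := heN u; omega
      · right
        refine ⟨fun a => by simp only [hc0]; omega, ?_⟩
        intro a ha
        have : ((⟨(a : ℕ) + 1, ha⟩ : Fin k) : ℕ) * N = (a : ℕ) * N + N := by
          simp [Nat.succ_mul]
        simp only [hc0, this]
        have := heN v; have := heN u; omega
  have hc0lt : ∀ v a, c0 v a < k * N := by
    intro v a
    have h1 : (e v : ℕ) + (a : ℕ) * N < ((a : ℕ) + 1) * N := by
      have := heN v; simp [Nat.succ_mul]; omega
    have h2 : ((a : ℕ) + 1) * N ≤ k * N := Nat.mul_le_mul_right N a.isLt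
    simp only [hc0]; omega
  have hS1ne : {n | ∃ c : V → Fin k → ℕ,
      IsInterleavedColoring G k c ∧ ∀ v a, c v a < n}.Nonempty :=
    ⟨k * N, c0, hc0col, hc0lt⟩
  have hS2ne : {n | ∃ φ : GraphOrientation (lexProd G k),
      φ.Acyclic ∧ IsLayered φ ∧ n = dirPathLen φ.dir}.Nonempty := by
    obtain ⟨φ, hac, hlay, -⟩ := dir1 c0 hc0col hc0lt
    exact ⟨dirPathLen φ.dir, φ, hac, hlay, rfl⟩
  refine le_antisymm ?_ ?_
  · refine le_csInf hS2ne ?_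
    rintro n ⟨φ, hac, hlay, rfl⟩
    obtain ⟨c, hcc, hclt⟩ := dir2 hk φ hac hlay
    exact Nat.sInf_le ⟨c, hcc, hclt⟩
  · refine le_csInf hS1ne ?_
    rintro n ⟨c, hcc, hclt⟩
    obtain ⟨φ, hac, hlay, hle⟩ := dir1 c hcc hclt
    exact le_trans (Nat.sInf_le ⟨φ, hac, hlay, rfl⟩) hle

end Main
end

section
/- Let φ be a layered acyclic orientation of G^k and let p be a longest directed path under φ. If p contains an edge directed from i^{k1} to j^{k2} with k1 ≥ k2, then either k1 = k2 and for every ℓ = 1,...,k the edge between i^ℓ and j^ℓ is directed from i^ℓ to j^ℓ, or k1 = k2 + 1, i ≠ j, and for every ℓ = 1,...,k the edge between i^ℓ and j^ℓ is directed from j^ℓ to i^ℓ. -/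
open SimpleGraph

open scoped Classical

section Helpers

variable {α : Type*}

lemma myMemZipTailSplit {l : List α} {x y : α} (h : (x, y) ∈ l.zip l.tail) :
    ∃ l₁ l₂, l = l₁ ++ x :: y :: l₂ := by
  induction l with
  | nil => simp at h
  | cons z l ih =>
    cases l with
    | nil => simp at h
    | cons w l' =>
      simp only [List.tail_cons, List.zip_cons_cons, List.mem_cons] at h
      rcases h with h | h
      · obtain ⟨rfl, rfl⟩ := Prod.mk.injEq x y z w ▸ h
        exact ⟨[], l', rfl⟩
      · obtain ⟨l₁, l₂, he⟩ := ih h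
        exact ⟨z :: l₁, l₂, by rw [List.cons_append, he]⟩

lemma myInsertChain {r : α → α → Prop} {l₁ l₂ : List α} {x y z : α}
    (h : (l₁ ++ x :: y :: l₂).Chain' r) (hxz : r x z) (hzy : r z y) :
    (l₁ ++ x :: z :: y :: l₂).Chain' r := by
  rw [List.Chain', List.isChain_append] at h ⊢
  obtain ⟨h1, h2, h3⟩ := h
  rw [List.isChain_cons_cons] at h2
  exact ⟨h1, List.isChain_cons_cons.2 ⟨hxz, List.isChain_cons_cons.2 ⟨hzy, h2.2⟩⟩, by simpa using h3⟩

lemma myChainAll {r : α → α → Prop} {P : α → Prop}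
    (hr : ∀ x y, r x y → (P x ↔ P y)) :
    ∀ {l : List α}, l.Chain' r → ∀ x ∈ l, P x → ∀ y ∈ l, P y := by
  intro l
  induction l with
  | nil => simp
  | cons z l ih =>
    intro h x hx hPx y hy
    cases l with
    | nil =>
      simp only [List.mem_singleton] at hx hy
      subst hx; subst hy; exact hPx
    | cons w l' =>
      rw [List.Chain', List.isChain_cons_cons] at h
      have hzw := hr _ _ h.1
      rcases List.mem_cons.1 hx with rfl | hx'
      · have hPw : P w := hzw.1 hPx
        rcases List.mem_cons.1 hy with rfl | hy'
        · exact hPx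
        · exact ih h.2 w List.mem_cons_self hPw y hy'
      · have hall := ih h.2 x hx' hPx
        rcases List.mem_cons.1 hy with rfl | hy'
        · exact hzw.2 (hall w List.mem_cons_self)
        · exact hall y hy'

lemma myChainImpMem {r s : α → α → Prop} {l : List α} (h : l.Chain' r)
    (himp : ∀ x ∈ l, ∀ y ∈ l, r x y → s x y) : l.Chain' s := by
  rw [List.Chain', List.isChain_iff_getElem] at h ⊢
  intro n hn
  exact himp _ (List.getElem_mem _) _ (List.getElem_mem _) (h n hn)

end Helpers

/-- Lemma 3: Let `φ` be a layered acyclic orientation of `G^k`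
and `p` a longest directed path under `φ`. If `p` contains an edge directed
from `(i, a)` to `(j, b)` with `a ≥ b` (layers `k₁ ≥ k₂`), then either
`a = b` and for every layer `ℓ` the edge between `(i, ℓ)` and `(j, ℓ)` is
directed from `(i, ℓ)` to `(j, ℓ)`, or `a = b + 1`, `i ≠ j`, and for every
layer `ℓ` that edge is directed from `(j, ℓ)` to `(i, ℓ)`. -/


theorem stmt8 {V : Type*} [Fintype V] (G : SimpleGraph V)
    (hE : G.edgeSet.Nonempty) (k : ℕ) (hk : 1 ≤ k)
    (φ : GraphOrientation (lexProd G k)) (hl : IsLayered φ) (hac : φ.Acyclic)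
    (p : List (V × Fin k)) (hchain : p.Chain' φ.dir)
    (hmax : ∀ q : List (V × Fin k), q.Chain' φ.dir → q.length ≤ p.length)
    (i j : V) (a b : Fin k) (hmem : ((i, a), (j, b)) ∈ p.zip p.tail)
    (hba : (b : ℕ) ≤ (a : ℕ)) :
    (a = b ∧ ∀ ℓ : Fin k, φ.dir (i, ℓ) (j, ℓ)) ∨
    ((a : ℕ) = (b : ℕ) + 1 ∧ i ≠ j ∧ ∀ ℓ : Fin k, φ.dir (j, ℓ) (i, ℓ)) := by
  classical
  obtain ⟨l₁, l₂, hp⟩ := myMemZipTailSplit hmem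
  subst hp
  have hXY : φ.dir (i, a) (j, b) :=
    (List.isChain_cons_cons.1 (List.isChain_append.1 hchain).2.1).1
  have hadj : (lexProd G k).Adj (i, a) (j, b) := (φ.dir_iff _ _).2 (Or.inl hXY)
  have noZ : ∀ z, φ.dir (i, a) z → φ.dir z (j, b) → False := by
    intro z h1 h2
    have hc := myInsertChain hchain h1 h2
    have hlen := hmax _ hc
    simp only [List.length_append, List.length_cons] at hlen
    omega
  by_cases hab : (a : ℕ) = (b : ℕ)
  · have hab' : a = b := Fin.ext hab
    subst hab'
    exact Or.inl ⟨rfl, fun ℓ => hl.2 i j a ℓ hXY⟩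
  · have hba' : (b : ℕ) < (a : ℕ) := lt_of_le_of_ne hba (fun h => hab h.symm)
    have hbafin : b < a := by rw [Fin.lt_def]; exact hba'
    by_cases hij : i = j
    · exfalso
      subst hij
      by_cases hnb : ∃ m, G.Adj i m
      · obtain ⟨m, hm⟩ := hnb
        have hadj_a : (lexProd G k).Adj (i, a) (m, a) := Or.inl hm
        rcases (φ.dir_iff _ _).1 hadj_a with hdim | hdmi
        · exact noZ (m, a) hdim (hl.1 (m, a) (i, b) (Or.inl hm.symm) hbafin)
        · have hdmb : φ.dir (m, b) (i, b) := hl.2 m i a b hdmi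
          exact noZ (m, b) (hl.1 (i, a) (m, b) (Or.inl hm) hbafin) hdmb
      · push_neg at hnb
        have hPstep : ∀ x y : V × Fin k, φ.dir x y → (x.1 = i ↔ y.1 = i) := by
          intro x y hxy
          have hadjxy : (lexProd G k).Adj x y := (φ.dir_iff _ _).2 (Or.inl hxy)
          rcases hadjxy with hG | ⟨he, _⟩
          · constructor
            · intro h; exact absurd (h ▸ hG) (hnb y.1)
            · intro h; exact absurd (h ▸ hG).symm (hnb x.1)
          · rw [he]
        have hmemp : (i, a) ∈ l₁ ++ (i, a) :: (i, b) :: l₂ := by simp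
        have hall := myChainAll hPstep hchain (i, a) hmemp rfl
        have hdec : (l₁ ++ (i, a) :: (i, b) :: l₂).Chain' (fun x y => y.2 < x.2) := by
          refine myChainImpMem hchain ?_
          intro x hx y hy hxy
          have hxi : x.1 = i := hall x hx
          have hyi : y.1 = i := hall y hy
          have hadjxy : (lexProd G k).Adj x y := (φ.dir_iff _ _).2 (Or.inl hxy)
          rcases hadjxy with hG | ⟨heq, hne⟩
          · exact absurd (hxi ▸ hG) (hnb y.1)
          · rcases hne.lt_or_gt with h | h
            · exfalso
              have hyx : φ.dir y x :=
                hl.1 y x ((lexProd G k).symm.symm _ _ (Or.inr ⟨heq, hne⟩)) h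
              exact φ.not_both x y hxy hyx
            · exact h
        have hlenk : (l₁ ++ (i, a) :: (i, b) :: l₂).length ≤ k := by
          have hmap : ((l₁ ++ (i, a) :: (i, b) :: l₂).map Prod.snd).Chain'
              (fun x y : Fin k => y < x) := (List.isChain_map _).2 hdec
          have hpw : ((l₁ ++ (i, a) :: (i, b) :: l₂).map Prod.snd).Pairwise
              (fun x y : Fin k => y < x) := by
                haveI : Trans (fun x y : Fin k => y < x) (fun x y : Fin k => y < x) (fun x y : Fin k => y < x) := ⟨fun h1 h2 => lt_trans h2 h1⟩
                exact List.isChain_iff_pairwise.1 hmap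
          have hnd : ((l₁ ++ (i, a) :: (i, b) :: l₂).map Prod.snd).Nodup :=
            hpw.imp (fun h => (ne_of_lt h).symm)
          calc (l₁ ++ (i, a) :: (i, b) :: l₂).length
              = ((l₁ ++ (i, a) :: (i, b) :: l₂).map Prod.snd).length :=
                (List.length_map _).symm
            _ ≤ Fintype.card (Fin k) := hnd.length_le_card
            _ = k := Fintype.card_fin k
        obtain ⟨e, he⟩ := hE
        induction e using Sym2.ind with
        | _ u v =>
        have huv : G.Adj u v := G.mem_edgeSet.1 he
        have hkpos : 0 < k := hk
        obtain ⟨u', v', huv', hd⟩ :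
            ∃ u' v', G.Adj u' v' ∧ ∀ ℓ : Fin k, φ.dir (u', ℓ) (v', ℓ) := by
          have hadj0 : (lexProd G k).Adj (u, ⟨0, hkpos⟩) (v, ⟨0, hkpos⟩) :=
            Or.inl huv
          rcases (φ.dir_iff _ _).1 hadj0 with h | h
          · exact ⟨u, v, huv, fun ℓ => hl.2 u v _ ℓ h⟩
          · exact ⟨v, u, huv.symm, fun ℓ => hl.2 v u _ ℓ h⟩
        have key : ∀ n : ℕ, ∀ hn : n < k, ∃ q : List (V × Fin k),
            q.Chain' φ.dir ∧ q.length = n + 1 ∧ q.head? = some (v', ⟨n, hn⟩) := by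
          intro n
          induction n with
          | zero => exact fun hn => ⟨[(v', ⟨0, hn⟩)], by simp [List.Chain'], by simp, rfl⟩
          | succ m ih =>
            intro hn
            obtain ⟨q, hc, hlen2, hh⟩ := ih (by omega)
            refine ⟨(v', ⟨m + 1, hn⟩) :: q, ?_, by simp [hlen2], rfl⟩
            rw [List.Chain', List.isChain_cons]
            refine ⟨?_, hc⟩
            intro y hy
            rw [hh, Option.mem_some_iff] at hy
            subst hy
            refine hl.1 _ _ (Or.inr ⟨rfl, Fin.ne_of_val_ne ?_⟩) ?_
            · simp
            · rw [Fin.lt_def]; simp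
        obtain ⟨q, hc, hlen2, hh⟩ := key (k - 1) (by omega)
        have hq : ((u', (⟨k - 1, by omega⟩ : Fin k)) :: q).Chain' φ.dir := by
          rw [List.Chain', List.isChain_cons]
          refine ⟨?_, hc⟩
          intro y hy
          rw [hh, Option.mem_some_iff] at hy
          subst hy
          exact hd _
        have hlq := hmax _ hq
        rw [List.length_cons, hlen2] at hlq
        omega

    · have hGij : G.Adj i j := by
        rcases hadj with h | ⟨h, _⟩
        · exact h
        · exact absurd h hij
      have hjiall : ∀ ℓ, φ.dir (j, ℓ) (i, ℓ) := by
        have hadjb : (lexProd G k).Adj (i, b) (j, b) := Or.inl hGij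
        rcases (φ.dir_iff _ _).1 hadjb with h | h
        · exfalso
          have hija : φ.dir (i, a) (j, a) := hl.2 i j b a h
          refine noZ (j, a) hija (hl.1 (j, a) (j, b) (Or.inr ⟨rfl, ?_⟩) hbafin)
          exact Fin.ne_of_val_ne hab
        · exact fun ℓ => hl.2 j i b ℓ h
      refine Or.inr ⟨?_, hij, hjiall⟩
      by_contra hne1
      have hlt : (b : ℕ) + 1 < (a : ℕ) := by omega
      have hbk : (b : ℕ) + 1 < k := lt_trans hlt a.isLt
      refine noZ (j, ⟨(b : ℕ) + 1, hbk⟩)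
        (hl.1 _ _ (Or.inl hGij) ?_)
        (hl.1 _ _ (Or.inr ⟨rfl, Fin.ne_of_val_ne (by simp)⟩) ?_)
      · rw [Fin.lt_def]; exact hlt
      · rw [Fin.lt_def]; exact Nat.lt_succ_self _
end

section
/- If p is a longest directed path of G^k under a layered acyclic orientation, then no edge of p joins two copies i^{k1} and i^{k1-1} of the same node i of G. -/
open SimpleGraph

open scoped Classical

lemma mem_zip_tail_split {α : Type*} {x y : α} :
    ∀ {l : List α}, (x, y) ∈ l.zip l.tail → ∃ l₁ l₂, l = l₁ ++ x :: y :: l₂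
  | [], h => by simp at h
  | [a], h => by simp at h
  | a :: b :: t, h => by
    rcases (by simpa using h : (x = a ∧ y = b) ∨ (x, y) ∈ (b :: t).zip t) with ⟨rfl, rfl⟩ | h'
    · exact ⟨[], t, rfl⟩
    · obtain ⟨l₁, l₂, e⟩ := mem_zip_tail_split (l := b :: t) (by simpa using h')
      exact ⟨a :: l₁, l₂, by simp [e]⟩

lemma chain'_insert {α : Type*} {R : α → α → Prop} {l₁ l₂ : List α} {x y w : α}
    (h : (l₁ ++ x :: y :: l₂).Chain' R) (hxw : R x w) (hwy : R w y) :
    (l₁ ++ x :: w :: y :: l₂).Chain' R := by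
  unfold List.Chain' at h ⊢
  rw [List.isChain_append_cons_cons] at h ⊢
  exact ⟨h.1, hxw, List.isChain_cons_cons.2 ⟨hwy, h.2.2⟩⟩

/-- If `p` is a longest directed path of `G^k` under a layered
acyclic orientation, then no edge of `p` joins two copies `i^{k₁}` and
`i^{k₁-1}` of the same node `i` of `G`. -/
theorem stmt9 {V : Type*} [Fintype V] (G : SimpleGraph V)
    (hE : G.edgeSet.Nonempty) (k : ℕ) (hk : 2 ≤ k)
    (φ : GraphOrientation (lexProd G k)) (hl : IsLayered φ) (hac : φ.Acyclic)
    (p : List (V × Fin k)) (hchain : p.Chain' φ.dir)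
    (hmax : ∀ q : List (V × Fin k), q.Chain' φ.dir → q.length ≤ p.length) :
    ∀ (i : V) (a b : Fin k), (a : ℕ) = (b : ℕ) + 1 →
      ((i, a), (i, b)) ∉ p.zip p.tail := by
  intro i a b hab hmem
  have hba : b < a := by rw [Fin.lt_def]; omega
  obtain ⟨l₁, l₂, hp⟩ := mem_zip_tail_split hmem
  by_cases hnbr : ∃ j, G.Adj i j
  · -- `i` has a neighbor: insert a vertex between `(i,a)` and `(i,b)`.
    obtain ⟨j, hij⟩ := hnbr
    have hadj0 : (lexProd G k).Adj (i, a) (j, a) := Or.inl hij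
    have hch0 : (l₁ ++ (i, a) :: (i, b) :: l₂).Chain' φ.dir := hp ▸ hchain
    have key : ∃ w, φ.dir (i, a) w ∧ φ.dir w (i, b) := by
      rcases (φ.dir_iff _ _).1 hadj0 with hdir | hdir
      · exact ⟨(j, a), hdir, hl.1 (j, a) (i, b) (Or.inl hij.symm) hba⟩
      · exact ⟨(j, b), hl.1 (i, a) (j, b) (Or.inl hij) hba, hl.2 j i a b hdir⟩
    obtain ⟨w, h1, h2⟩ := key
    have := hmax _ (chain'_insert hch0 h1 h2)
    rw [hp] at this
    simp at this
  · -- `i` is isolated: then `p` stays among copies of `i`, so `p.length ≤ k`,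
    -- but an edge of `G` yields a chain of length `k + 1`.
    push_neg at hnbr
    have hmemp : (i, a) ∈ p := (List.of_mem_zip hmem).1
    -- every vertex of `p` is a copy of `i`
    have hS : p.Chain' (fun x y : V × Fin k => x.1 = i ↔ y.1 = i) := by
      refine hchain.imp ?_
      intro x y h
      have hadj : (lexProd G k).Adj x y := (φ.dir_iff x y).2 (Or.inl h)
      rcases hadj with hG | ⟨h1, _⟩
      · constructor
        · intro hx; exact absurd (hx ▸ hG) (hnbr y.1)
        · intro hy; exact absurd (hy ▸ hG.symm) (hnbr x.1)
      · rw [h1]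
    haveI : IsTrans (V × Fin k) (fun x y : V × Fin k => x.1 = i ↔ y.1 = i) :=
      ⟨fun _ _ _ h1 h2 => h1.trans h2⟩
    have hpw2 := List.isChain_iff_pairwise.1 hS
    have hallI : ∀ x ∈ p, x.1 = i := by
      intro x hx
      rcases eq_or_ne x (i, a) with rfl | hne
      · rfl
      · haveI : Std.Symm (fun x y : V × Fin k => x.1 = i ↔ y.1 = i) := ⟨fun _ _ h => h.symm⟩
        exact (hpw2.forall hx hmemp hne).2 rfl
    -- `p` has pairwise distinct vertices
    haveI : IsTrans (V × Fin k) (Relation.TransGen φ.dir) :=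
      ⟨fun _ _ _ h1 h2 => h1.trans h2⟩
    have hpw : p.Pairwise (Relation.TransGen φ.dir) :=
      List.isChain_iff_pairwise.1 (hchain.imp fun _ _ h => Relation.TransGen.single h)
    have hnd : p.Nodup := by
      refine hpw.imp ?_
      intro x y h e
      exact hac x (e ▸ h)
    have hlen : p.length ≤ k := by
      have hnd2 : (p.map Prod.snd).Nodup := by
        refine List.Nodup.map_on ?_ hnd
        intro x hx y hy hxy
        exact Prod.ext ((hallI x hx).trans (hallI y hy).symm) hxy
      have := hnd2.length_le_card
      simpa using this
    -- build a chain of length `k + 1` from an edge of `G`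
    obtain ⟨u, v, huv⟩ : ∃ u v, G.Adj u v := by
      obtain ⟨e, he⟩ := hE
      induction e using Sym2.ind with
      | _ u v => exact ⟨u, v, he⟩
    set top : Fin k := ⟨k - 1, by omega⟩ with htop
    obtain ⟨u, v, huv, hd⟩ : ∃ u v, G.Adj u v ∧ φ.dir (u, top) (v, top) := by
      rcases (φ.dir_iff (u, top) (v, top)).1 (Or.inl huv) with h | h
      · exact ⟨u, v, huv, h⟩
      · exact ⟨v, u, huv.symm, h⟩
    have hdall : ∀ c : Fin k, φ.dir (u, top) (v, c) := by
      intro c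
      rcases lt_or_eq_of_le (show c ≤ top by rw [Fin.le_def]; have := c.isLt; simp [htop]; omega)
        with hc | hc
      · exact hl.1 (u, top) (v, c) (Or.inl huv) hc
      · exact hc ▸ hd
    set L : List (V × Fin k) :=
      (u, top) :: (List.finRange k).reverse.map (fun c => (v, c)) with hL
    have hchL : L.Chain' φ.dir := by
      refine List.isChain_cons.2 ⟨?_, ?_⟩
      · intro y hy
        have hy' : y ∈ (List.finRange k).reverse.map (fun c => (v, c)) :=
          List.mem_of_mem_head? hy
        obtain ⟨c, _, rfl⟩ := List.mem_map.1 hy'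
        exact hdall c
      · have hrev : ((List.finRange k).reverse).Pairwise (fun c c' : Fin k => c' < c) :=
          List.pairwise_reverse.2 (List.pairwise_lt_finRange k)
        refine List.Pairwise.isChain (hrev.map (fun c => (v, c)) ?_)
        intro c c' (hcc : c' < c)
        exact hl.1 (v, c) (v, c') (Or.inr ⟨rfl, hcc.ne'⟩) hcc
      -- done
    have := hmax L hchL
    rw [hL] at this
    simp at this
    omega
end

section
/- If G is a forest with at least one edge, then the interleaved multichromatic number of G equals 2. -/
open SimpleGraph

open scoped Classical

section AuxProofs

open SimpleGraph

/-- In an acyclic graph, paths from a common origin to two adjacent vertices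
have lengths of different parity. -/
lemma aux_path_parity {V : Type*} {G : SimpleGraph V} (hG : G.IsAcyclic)
    {r u v : V} {P : G.Walk r u} {Q : G.Walk r v} (hP : P.IsPath) (hQ : Q.IsPath)
    (h : G.Adj u v) : P.length % 2 ≠ Q.length % 2 := by
  by_cases hv : v ∈ P.support
  · have hT : (P.takeUntil v hv).IsPath := hP.takeUntil hv
    have hD : (P.dropUntil v hv).IsPath := hP.dropUntil hv
    have hQ' : P.takeUntil v hv = Q :=
      congrArg Subtype.val (hG.path_unique ⟨_, hT⟩ ⟨Q, hQ⟩)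
    have hD' : P.dropUntil v hv = SimpleGraph.Walk.cons h.symm SimpleGraph.Walk.nil := by
      have hp2 : (SimpleGraph.Walk.cons h.symm (SimpleGraph.Walk.nil : G.Walk u u)).IsPath := by
        rw [SimpleGraph.Walk.cons_isPath_iff]
        simp [h.ne']
      exact congrArg Subtype.val (hG.path_unique ⟨_, hD⟩ ⟨_, hp2⟩)
    have hlen : (P.takeUntil v hv).length + (P.dropUntil v hv).length = P.length := by
      rw [← SimpleGraph.Walk.length_append, SimpleGraph.Walk.take_spec]
    rw [hQ', hD'] at hlen
    simp only [SimpleGraph.Walk.length_cons, SimpleGraph.Walk.length_nil] at hlen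
    omega
  · have hcons : (SimpleGraph.Walk.cons h.symm P.reverse).IsPath := by
      rw [SimpleGraph.Walk.cons_isPath_iff]
      refine ⟨hP.reverse, ?_⟩
      simpa [SimpleGraph.Walk.support_reverse] using hv
    have hconcat : (P.concat h).IsPath := by
      have := hcons.reverse
      rwa [SimpleGraph.Walk.reverse_cons, SimpleGraph.Walk.reverse_reverse] at this
    have heq : P.concat h = Q :=
      congrArg Subtype.val (hG.path_unique ⟨_, hconcat⟩ ⟨Q, hQ⟩)
    have hlen : Q.length = P.length + 1 := by
      rw [← heq, SimpleGraph.Walk.length_concat]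
    omega

/-- A forest admits a proper 2-coloring (valued in `{0,1} ⊆ ℕ`). -/
lemma aux_forest_two_coloring {V : Type*} {G : SimpleGraph V} (hG : G.IsAcyclic) :
    ∃ col : V → ℕ, (∀ v, col v < 2) ∧ ∀ u v, G.Adj u v → col u ≠ col v := by
  classical
  have hr : ∀ v : V, G.Reachable ((G.connectedComponentMk v).out) v := by
    intro v
    have : G.connectedComponentMk (G.connectedComponentMk v).out = G.connectedComponentMk v :=
      (G.connectedComponentMk v).out_eq
    exact SimpleGraph.ConnectedComponent.exact this
  refine ⟨fun v => ((hr v).some.bypass.length) % 2, fun v => Nat.mod_lt _ (by norm_num), ?_⟩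
  intro u v huv
  have hcomp : (G.connectedComponentMk u) = (G.connectedComponentMk v) :=
    SimpleGraph.ConnectedComponent.sound huv.reachable
  have hout : Quot.out (G.connectedComponentMk v) = Quot.out (G.connectedComponentMk u) :=
    (congrArg Quot.out hcomp).symm
  have hPu : ((hr u).some.bypass).IsPath := SimpleGraph.Walk.bypass_isPath _
  have hPv' : (((hr v).some.bypass).copy hout rfl).IsPath := by
    rw [SimpleGraph.Walk.isPath_copy]
    exact SimpleGraph.Walk.bypass_isPath _
  have hpar := aux_path_parity hG hPu hPv' huv
  rw [SimpleGraph.Walk.length_copy] at hpar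
  exact hpar

end AuxProofs

/-- For a forest with an edge, `chiIntK G k = 2 * k` for every `k ≥ 1`. -/
lemma aux_chiIntK {V : Type*} (G : SimpleGraph V)
    (hE : G.edgeSet.Nonempty) (hforest : G.IsAcyclic) (k : ℕ) (hk : 0 < k) :
    chiIntK G k = 2 * k := by
  classical
  obtain ⟨e, he⟩ := hE
  obtain ⟨u₀, v₀, huv₀⟩ : ∃ u v, G.Adj u v := by
    induction e using Sym2.ind with
    | _ x y => exact ⟨x, y, he⟩
  obtain ⟨col, hcol2, hcolne⟩ := aux_forest_two_coloring hforest
  -- membership: the coloring c v a = 2*a + col v works with 2*k colors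
  have hmem : (2 * k) ∈ {n | ∃ c : V → Fin k → ℕ,
      IsInterleavedColoring G k c ∧ ∀ v a, c v a < n} := by
    refine ⟨fun v a => 2 * (a : ℕ) + col v, ⟨⟨?_, ?_⟩, ?_⟩, ?_⟩
    · intro v a b hab
      show 2 * (a : ℕ) + col v < 2 * (b : ℕ) + col v
      have : (a : ℕ) < b := hab
      omega
    · intro u v huv a b
      show 2 * (a : ℕ) + col u ≠ 2 * (b : ℕ) + col v
      have h1 := hcolne u v huv
      have h2 := hcol2 u
      have h3 := hcol2 v
      omega
    · intro u v huv
      have h1 := hcolne u v huv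
      have h2 := hcol2 u
      have h3 := hcol2 v
      rcases Nat.lt_or_ge (col u) (col v) with hlt | hge
      · left
        constructor
        · intro a
          show 2 * (a : ℕ) + col u < 2 * (a : ℕ) + col v
          omega
        · intro a ha
          show 2 * (a : ℕ) + col v < 2 * ((a : ℕ) + 1) + col u
          omega
      · right
        have hlt2 : col v < col u := by omega
        constructor
        · intro a
          show 2 * (a : ℕ) + col v < 2 * (a : ℕ) + col u
          omega
        · intro a ha
          show 2 * (a : ℕ) + col u < 2 * ((a : ℕ) + 1) + col v
          omega
    · intro v a
      show 2 * (a : ℕ) + col v < 2 * k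
      have h1 := hcol2 v
      have h2 : (a : ℕ) < k := a.isLt
      omega
  -- lower bound: any interleaved coloring needs at least 2*k colors
  have hlb : ∀ n ∈ {n | ∃ c : V → Fin k → ℕ,
      IsInterleavedColoring G k c ∧ ∀ v a, c v a < n}, 2 * k ≤ n := by
    rintro n ⟨c, ⟨_, halt⟩, hlt⟩
    have key : ∀ u v : V, Alt k c u v → 2 * k ≤ n := by
      intro u v hA
      have hstep : ∀ m (hm : m < k), 2 * m + 1 ≤ c v ⟨m, hm⟩ := by
        intro m
        induction m with
        | zero => intro hm; have := hA.1 ⟨0, hm⟩; omega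
        | succ p ih =>
          intro hm
          have hp : p < k := Nat.lt_of_succ_lt hm
          have h1 := ih hp
          have h2 : c v ⟨p, hp⟩ < c u ⟨p + 1, hm⟩ := hA.2 ⟨p, hp⟩ hm
          have h3 : c u ⟨p + 1, hm⟩ < c v ⟨p + 1, hm⟩ := hA.1 ⟨p + 1, hm⟩
          omega
      have hk1 : k - 1 < k := by omega
      have h1 := hstep (k - 1) hk1
      have h2 := hlt v ⟨k - 1, hk1⟩
      omega
    rcases halt u₀ v₀ huv₀ with hA | hA
    · exact key _ _ hA
    · exact key _ _ hA
  exact le_antisymm (Nat.sInf_le hmem) (le_csInf ⟨_, hmem⟩ hlb)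

/-- If `G` is a forest with at least one edge, then the
interleaved multichromatic number of `G` equals 2. -/
theorem stmt10 {V : Type*} [Fintype V] (G : SimpleGraph V)
    (hE : G.edgeSet.Nonempty) (hforest : G.IsAcyclic) :
    chiIntStar G = 2 := by
  have h2 : ∀ k : ℕ+, (chiIntK G (k : ℕ) : ℝ) / (((k : ℕ) : ℕ) : ℝ) = 2 := by
    intro k
    rw [aux_chiIntK G hE hforest (k : ℕ) k.pos]
    have hk : (((k : ℕ) : ℕ) : ℝ) ≠ 0 := Nat.cast_ne_zero.mpr k.pos.ne'
    push_cast
    field_simp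
  rw [chiIntStar, iInf_congr h2, ciInf_const]
end

section
/- For the odd cycle C_{2r+1} (r ≥ 1), the interleaved multichromatic number equals (2r+1)/r. -/
open SimpleGraph

open scoped Classical

section Aux

open Finset

/-- Auxiliary color function: vertex `i` of `C_{2r+1}` receives sorted colors
`fcol i 0 < fcol i 1 < ⋯ < fcol i (r-1)` (set `{i + 2a mod 2r+1}`). -/
private def fcol (i a : ℕ) : ℕ :=
  if i = 0 then 2*a
  else if i % 2 = 1 then (if 2*a + 1 < i then 2*a else 2*a+1)
  else (if 2*a+2 < i then 2*a+1 else 2*a+2)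

private lemma fcol_mono {i a b : ℕ} (h : a < b) : fcol i a < fcol i b := by
  unfold fcol; split_ifs <;> first | omega | exact absurd rfl (by assumption) | exact False.elim (by assumption)

private lemma fcol_lt {r i a : ℕ} (hi : i < 2*r+1) (ha : a < r) : fcol i a < 2*r+1 := by
  unfold fcol; split_ifs <;> first | omega | exact absurd rfl (by assumption) | exact False.elim (by assumption)

private lemma keyA {r i a : ℕ} (ha : a < r) (hpar : i = 0 ∨ i % 2 = 1) :
    fcol i a < fcol (i+1) a := by
  unfold fcol; split_ifs <;> first | omega | exact absurd rfl (by assumption) | exact False.elim (by assumption)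

private lemma keyA' {r i a : ℕ} (ha : a + 1 < r) (hpar : i = 0 ∨ i % 2 = 1) :
    fcol (i+1) a < fcol i (a+1) := by
  unfold fcol; split_ifs <;> first | omega | exact absurd rfl (by assumption) | exact False.elim (by assumption)

private lemma keyB {r i a : ℕ} (ha : a < r) (h0 : i ≠ 0) (hpar : i % 2 = 0) :
    fcol (i+1) a < fcol i a := by
  unfold fcol; split_ifs <;> first | omega | exact absurd rfl (by assumption) | exact False.elim (by assumption)

private lemma keyB' {r i a : ℕ} (ha : a + 1 < r) (h0 : i ≠ 0) (hpar : i % 2 = 0) :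
    fcol i a < fcol (i+1) (a+1) := by
  unfold fcol; split_ifs <;> first | omega | exact absurd rfl (by assumption) | exact False.elim (by assumption)

private lemma keyC {r a : ℕ} (hr : 1 ≤ r) (ha : a < r) : fcol 0 a < fcol (2*r) a := by
  unfold fcol; split_ifs <;> first | omega | exact absurd rfl (by assumption) | exact False.elim (by assumption)

private lemma keyC' {r a : ℕ} (hr : 1 ≤ r) (ha : a + 1 < r) :
    fcol (2*r) a < fcol 0 (a+1) := by
  unfold fcol; split_ifs <;> first | omega | exact absurd rfl (by assumption) | exact False.elim (by assumption)

/-- The optimal interleaved `r`-tuple coloring of `C_{2r+1}`. -/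
private def myCol (r : ℕ) : Fin (2*r+1) → Fin r → ℕ := fun v a => fcol v.val a.val

private lemma val_one_eq (r : ℕ) (hr : 1 ≤ r) : ((1 : Fin (2*r+1)) : ℕ) = 1 := by
  rw [Fin.val_one', Nat.mod_eq_of_lt (by omega)]

private lemma myCol_alt (r : ℕ) (hr : 1 ≤ r) (u v : Fin (2*r+1)) (huv : v - u = 1) :
    Alt r (myCol r) u v ∨ Alt r (myCol r) v u := by
  have hv : v.val = (1 + u.val) % (2*r+1) := by
    have h : v = 1 + u := by rwa [sub_eq_iff_eq_add] at huv
    rw [h, Fin.val_add, val_one_eq r hr]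
  have hu := u.isLt
  rcases Nat.lt_or_ge u.val (2*r) with h2 | h2
  · have hv' : v.val = u.val + 1 := by rw [hv, Nat.mod_eq_of_lt (by omega)]; omega
    rcases Nat.eq_zero_or_pos u.val with h0 | h0
    · left
      refine ⟨fun a => ?_, fun a ha => ?_⟩
      · show fcol u.val a.val < fcol v.val a.val
        rw [hv']; exact keyA (r := r) a.isLt (Or.inl h0)
      · show fcol v.val a.val < fcol u.val (a.val + 1)
        rw [hv']; exact keyA' (r := r) ha (Or.inl h0)
    · rcases Nat.mod_two_eq_zero_or_one u.val with hp | hp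
      · right
        refine ⟨fun a => ?_, fun a ha => ?_⟩
        · show fcol v.val a.val < fcol u.val a.val
          rw [hv']; exact keyB (r := r) a.isLt (by omega) hp
        · show fcol u.val a.val < fcol v.val (a.val + 1)
          rw [hv']; exact keyB' (r := r) ha (by omega) hp
      · left
        refine ⟨fun a => ?_, fun a ha => ?_⟩
        · show fcol u.val a.val < fcol v.val a.val
          rw [hv']; exact keyA (r := r) a.isLt (Or.inr hp)
        · show fcol v.val a.val < fcol u.val (a.val + 1)
          rw [hv']; exact keyA' (r := r) ha (Or.inr hp)
  · have hu' : u.val = 2*r := by omega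
    have hv' : v.val = 0 := by
      rw [hv, hu']
      have he : 1 + 2*r = 2*r+1 := by omega
      rw [he, Nat.mod_self]
    right
    refine ⟨fun a => ?_, fun a ha => ?_⟩
    · show fcol v.val a.val < fcol u.val a.val
      rw [hv', hu']; exact keyC hr a.isLt
    · show fcol u.val a.val < fcol v.val (a.val + 1)
      rw [hv', hu']; exact keyC' hr ha

private lemma alt_imp_ne {V : Type*} {k : ℕ} {c : V → Fin k → ℕ} {u v : V}
    (hu : StrictMono (c u)) (h : Alt k c u v) (a b : Fin k) : c u a ≠ c v b := by
  rcases le_or_gt a b with hab | hba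
  · exact ne_of_lt (lt_of_le_of_lt (hu.monotone hab) (h.1 b))
  · have hb : (b : ℕ) + 1 ≤ (a : ℕ) := Fin.lt_def.mp hba
    have hk : (b : ℕ) + 1 < k := lt_of_le_of_lt hb a.isLt
    have h2 := h.2 b hk
    have h3 : c u ⟨(b : ℕ)+1, hk⟩ ≤ c u a := hu.monotone (by simpa [Fin.le_def] using hb)
    omega

private lemma myCol_interleaved (r : ℕ) (hr : 1 ≤ r) :
    IsInterleavedColoring (SimpleGraph.cycleGraph (2*r+1)) r (myCol r) := by
  have hmono : ∀ v : Fin (2*r+1), StrictMono (myCol r v) :=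
    fun v a b h => fcol_mono (Fin.lt_def.mp h)
  have halt : ∀ u v, (SimpleGraph.cycleGraph (2*r+1)).Adj u v →
      Alt r (myCol r) u v ∨ Alt r (myCol r) v u := by
    intro u v huv
    rcases (SimpleGraph.cycleGraph_adj').mp huv with h | h
    · have h' : u - v = 1 := Fin.ext (by rw [val_one_eq r hr]; exact h)
      exact (myCol_alt r hr v u h').symm
    · have h' : v - u = 1 := Fin.ext (by rw [val_one_eq r hr]; exact h)
      exact myCol_alt r hr u v h'
  refine ⟨⟨hmono, ?_⟩, halt⟩
  intro u v huv a b
  rcases halt u v huv with h | h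
  · exact alt_imp_ne (hmono u) h a b
  · exact (alt_imp_ne (hmono v) h b a).symm

private lemma chiIntK_ub (r : ℕ) (hr : 1 ≤ r) :
    chiIntK (SimpleGraph.cycleGraph (2*r+1)) r ≤ 2*r+1 :=
  Nat.sInf_le ⟨myCol r, myCol_interleaved r hr,
    fun v a => fcol_lt v.isLt a.isLt⟩

private lemma pad_mem (r k : ℕ) (hr : 1 ≤ r) :
    ∃ c : Fin (2*r+1) → Fin k → ℕ,
      IsInterleavedColoring (SimpleGraph.cycleGraph (2*r+1)) k c ∧
      ∀ v a, c v a < (2*r+1) * k := by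
  refine ⟨fun v a => v.val + a.val * (2*r+1), ⟨⟨?_, ?_⟩, ?_⟩, ?_⟩
  · intro v a b h
    have hab := Fin.lt_def.mp h
    have : a.val * (2*r+1) < b.val * (2*r+1) :=
      (Nat.mul_lt_mul_right (by omega : 0 < 2*r+1)).mpr hab
    simp only; omega
  · intro u v huv a b h
    simp only at h
    apply huv.ne
    apply Fin.ext
    have h1 : u.val = (u.val + a.val * (2*r+1)) % (2*r+1) := by
      rw [Nat.add_mul_mod_self_right, Nat.mod_eq_of_lt u.isLt]
    have h2 : v.val = (v.val + b.val * (2*r+1)) % (2*r+1) := by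
      rw [Nat.add_mul_mod_self_right, Nat.mod_eq_of_lt v.isLt]
    show u.val = v.val
    rw [h1, h2, h]
  · intro u v huv
    have hne : u.val ≠ v.val := fun h => huv.ne (Fin.ext h)
    have hv := v.isLt
    have hu := u.isLt
    rcases Nat.lt_or_ge u.val v.val with h | h
    · left
      refine ⟨fun a => by simp only; omega, fun a ha => ?_⟩
      show v.val + a.val * (2*r+1) < u.val + (a.val + 1) * (2*r+1)
      have : (a.val + 1) * (2*r+1) = a.val * (2*r+1) + (2*r+1) := by ring
      omega
    · right
      have h' : v.val < u.val := by omega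
      refine ⟨fun a => by simp only; omega, fun a ha => ?_⟩
      show u.val + a.val * (2*r+1) < v.val + (a.val + 1) * (2*r+1)
      have : (a.val + 1) * (2*r+1) = a.val * (2*r+1) + (2*r+1) := by ring
      omega
  · intro v a
    show v.val + a.val * (2*r+1) < (2*r+1) * k
    have h1 : (a.val + 1) * (2*r+1) ≤ k * (2*r+1) :=
      Nat.mul_le_mul_right _ a.isLt
    have h2 : (a.val + 1) * (2*r+1) = a.val * (2*r+1) + (2*r+1) := by ring
    have h3 : k * (2*r+1) = (2*r+1) * k := by ring
    have hv := v.isLt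
    omega

private lemma indep_bound (r : ℕ) (hr : 1 ≤ r) (S : Finset (Fin (2*r+1)))
    (hS : ∀ u ∈ S, ∀ v ∈ S, ¬ (SimpleGraph.cycleGraph (2*r+1)).Adj u v) :
    S.card ≤ r := by
  have hd : Disjoint S (S.image (· + 1)) := by
    rw [Finset.disjoint_left]
    intro x hx hx'
    obtain ⟨y, hy, hxy⟩ := Finset.mem_image.mp hx'
    apply hS y hy x hx
    rw [SimpleGraph.cycleGraph_adj']
    right
    rw [← hxy]
    show ((y + 1 - y : Fin (2*r+1)) : ℕ) = 1
    rw [add_sub_cancel_left, val_one_eq r hr]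
  have himg : (S.image (· + 1)).card = S.card :=
    Finset.card_image_of_injective S (add_left_injective 1)
  have hle : (S ∪ S.image (· + 1)).card ≤ 2*r+1 := by
    have h1 := Finset.card_le_univ (S ∪ S.image (· + 1))
    simpa using h1
  rw [Finset.card_union_of_disjoint hd, himg] at hle
  omega

private lemma count_bound (r k : ℕ) (hr : 1 ≤ r) {n : ℕ}
    (hn : ∃ c : Fin (2*r+1) → Fin k → ℕ,
      IsInterleavedColoring (SimpleGraph.cycleGraph (2*r+1)) k c ∧ ∀ v a, c v a < n) :
    (2*r+1) * k ≤ r * n := by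
  obtain ⟨c, ⟨⟨hmono, hne⟩, -⟩, hlt⟩ := hn
  have hmain : (Finset.univ : Finset (Fin (2*r+1) × Fin k)).card ≤ r * (Finset.range n).card := by
    apply Finset.card_le_mul_card_image_of_maps_to
        (f := fun p : Fin (2*r+1) × Fin k => c p.1 p.2)
        (fun p _ => Finset.mem_range.mpr (hlt p.1 p.2))
    intro t _
    set F := ({p ∈ Finset.univ | c p.1 p.2 = t} : Finset (Fin (2*r+1) × Fin k)) with hF
    have hinj : Set.InjOn (Prod.fst : Fin (2*r+1) × Fin k → Fin (2*r+1)) F := by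
      intro p hp q hq hpq
      simp only [hF, Finset.coe_filter, Set.mem_setOf_eq] at hp hq
      have h1 : c p.1 p.2 = c p.1 q.2 := by
        rw [hp.2, ← hq.2, hpq]
      have h2 : p.2 = q.2 := (hmono p.1).injective h1
      exact Prod.ext hpq h2
    have hcardeq : (F.image Prod.fst).card = F.card :=
      Finset.card_image_of_injOn hinj
    rw [← hcardeq]
    apply indep_bound r hr
    intro u hu v hv hadj
    obtain ⟨p, hp, hp1⟩ := Finset.mem_image.mp hu
    obtain ⟨q, hq, hq1⟩ := Finset.mem_image.mp hv
    simp only [hF, Finset.mem_filter] at hp hq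
    exact hne u v hadj p.2 q.2 (by rw [show u = p.1 from hp1.symm, show v = q.1 from hq1.symm, hp.2, hq.2])
  simp only [Finset.card_univ, Fintype.card_prod, Fintype.card_fin,
    Finset.card_range] at hmain
  exact hmain

private lemma chiIntK_lb (r k : ℕ) (hr : 1 ≤ r) :
    (2*r+1) * k ≤ r * chiIntK (SimpleGraph.cycleGraph (2*r+1)) k := by
  have hne : {n | ∃ c : Fin (2*r+1) → Fin k → ℕ,
      IsInterleavedColoring (SimpleGraph.cycleGraph (2*r+1)) k c ∧
      ∀ v a, c v a < n}.Nonempty := ⟨(2*r+1) * k, pad_mem r k hr⟩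
  exact count_bound r k hr (Nat.sInf_mem hne)

end Aux

/-- For the odd cycle `C_{2r+1}` (`r ≥ 1`), the interleaved
multichromatic number equals `(2r+1)/r`. -/
theorem stmt18 (r : ℕ) (hr : 1 ≤ r) :
    chiIntStar (SimpleGraph.cycleGraph (2 * r + 1)) = (2 * r + 1 : ℝ) / (r : ℝ) := by
  have hr0 : (0:ℝ) < (r:ℝ) := by exact_mod_cast hr
  have hlow : ∀ k : ℕ+, (2 * (r:ℝ) + 1) / (r:ℝ) ≤
      (chiIntK (SimpleGraph.cycleGraph (2*r+1)) k : ℝ) / ((k:ℕ) : ℝ) := by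
    intro k
    have hk0 : (0:ℝ) < ((k:ℕ):ℝ) := by exact_mod_cast k.pos
    rw [div_le_div_iff₀ hr0 hk0]
    have h := chiIntK_lb r k hr
    have h' : ((2*r+1) * k : ℕ) ≤ ((r * chiIntK (SimpleGraph.cycleGraph (2*r+1)) k : ℕ)) := h
    have h2 : (((2*r+1) * (k:ℕ) : ℕ) : ℝ) ≤ ((r * chiIntK (SimpleGraph.cycleGraph (2*r+1)) k : ℕ) : ℝ) := by
      exact_mod_cast h'
    push_cast at h2
    nlinarith [h2]
  have hbdd : BddBelow (Set.range fun k : ℕ+ =>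
      (chiIntK (SimpleGraph.cycleGraph (2*r+1)) k : ℝ) / ((k:ℕ) : ℝ)) := by
    refine ⟨(2 * (r:ℝ) + 1) / (r:ℝ), ?_⟩
    rintro x ⟨k, rfl⟩
    exact hlow k
  apply le_antisymm
  · have h1 : chiIntStar (SimpleGraph.cycleGraph (2*r+1)) ≤
        (chiIntK (SimpleGraph.cycleGraph (2*r+1)) ((⟨r, hr⟩ : ℕ+) : ℕ) : ℝ) / (((⟨r, hr⟩ : ℕ+) : ℕ) : ℝ) :=
      ciInf_le hbdd (⟨r, hr⟩ : ℕ+)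
    refine h1.trans ?_
    have h2 : chiIntK (SimpleGraph.cycleGraph (2*r+1)) r ≤ 2*r+1 := chiIntK_ub r hr
    have h3 : (chiIntK (SimpleGraph.cycleGraph (2*r+1)) r : ℝ) ≤ 2 * (r:ℝ) + 1 := by
      exact_mod_cast h2
    show (chiIntK (SimpleGraph.cycleGraph (2*r+1)) r : ℝ) / (r:ℝ) ≤ (2 * (r:ℝ) + 1) / (r:ℝ)
    gcongr
  · exact le_ciInf hlow
end
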